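/- With ∂_0 : C_0 → 𝔇 defined by (∂_0 a)^Y = ∑_{j∈Λ} a^Y_j and h_{−1} : 𝔇 → C_0 defined by h_{−1}(A)_j = ∑_{Y∈𝔅_d} (χ_Y(j)/|Y∩Λ|)·A^Y, one has ∂_0 ∘ h_{−1} = id on 𝔇. Consequently the map ρ : C_0/im(∂_1) → 𝔇 induced by ∂_0 is surjective. -/
import Mathlib


/-- `∂₀ ∘ h₋₁ = id` on the space `𝔇` of brick-indexed interactions, where
`(∂₀ a)^Y = ∑_j P Y (a j)` and `h₋₁(A)_j = ∑_Y (χ_Y(j)/|Y∩Λ|) • A^Y`; consequently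
the induced map `ρ : C₀/im ∂₁ → 𝔇` is surjective, i.e. every `A ∈ 𝔇` is `∂₀` of some
0-chain.  Here `w Y j` encodes `χ_Y(j)/|Y∩Λ|` (finite support, total weight 1), `P Y`
is the projection onto the brick component `𝔡^Y`, and the condition `A^Y ∈ 𝔡^Y` is
encoded by `P Y (A Z) = if Y = Z then A Z else 0`. -/
theorem stmt_14 {Λ B V : Type*} [DecidableEq B] [AddCommGroup V] [Module ℝ V]
    (w : B → Λ → ℝ) (P : B → V →ₗ[ℝ] V)
    (hw_fin : ∀ Y : B, (Function.support (w Y)).Finite)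
    (hw_sum : ∀ Y : B, (∑ᶠ j : Λ, w Y j) = 1)
    (A : B → V)
    (hA_orth : ∀ Y Z : B, P Y (A Z) = if Y = Z then A Z else 0)
    (hA_fin : ∀ j : Λ, (Function.support fun Y : B => w Y j • A Y).Finite) :
    (∀ Y : B, (∑ᶠ j : Λ, P Y (∑ᶠ Z : B, w Z j • A Z)) = A Y) ∧
    (∃ a : Λ → V, ∀ Y : B, (∑ᶠ j : Λ, P Y (a j)) = A Y) := by
  have key : ∀ Y : B, (∑ᶠ j : Λ, P Y (∑ᶠ Z : B, w Z j • A Z)) = A Y := by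
    intro Y
    have h1 : ∀ j, P Y (∑ᶠ Z : B, w Z j • A Z) = w Y j • A Y := by
      intro j
      have hmap : P Y (∑ᶠ Z : B, w Z j • A Z) = ∑ᶠ Z : B, P Y (w Z j • A Z) :=
        (P Y).toAddMonoidHom.map_finsum (hA_fin j)
      rw [hmap]
      have h2 : ∀ Z, P Y (w Z j • A Z) = if Y = Z then w Y j • A Y else 0 := by
        intro Z
        rw [map_smul, hA_orth]
        split
        · subst ‹Y = Z›; simp
        · simp
      calc (∑ᶠ Z, P Y (w Z j • A Z)) = ∑ᶠ Z, if Y = Z then w Y j • A Y else 0 :=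
            finsum_congr h2
        _ = w Y j • A Y := by rw [finsum_eq_single _ Y (fun Z hZ => by simp [Ne.symm hZ]), if_pos rfl]
    calc (∑ᶠ j : Λ, P Y (∑ᶠ Z : B, w Z j • A Z)) = ∑ᶠ j, w Y j • A Y :=
          finsum_congr h1
      _ = (∑ᶠ j, w Y j) • A Y := (finsum_smul' (hw_fin Y) _).symm
      _ = A Y := by rw [hw_sum Y, one_smul]
  exact ⟨key, ⟨fun j => ∑ᶠ Z : B, w Z j • A Z, key⟩⟩
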